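/- Let X be a non-empty perfect Polish space. For every n ∈ ℕ, every balanced scheme π of size n, and every non-empty open subset V of U(π) in the hyperspace K(X), there exists a balanced scheme π' of size n+1 consistent with π such that U(π') ⊆ V. -/

import Mathlib

open Filter Set TopologicalSpace
open scoped Classical

/-- `ValidIdx a l`: the list `l` is a valid index tuple, i.e. its `k`-th entry lies in
`{0, …, a k − 1}` (representing `{1, …, a_{k+1}}` in the paper, zero-indexed). -/
def ValidIdx (a : ℕ → ℕ) (l : List ℕ) : Prop :=
  ∀ k (hk : k < l.length), l.get ⟨k, hk⟩ < a k

/-- The distance `dist(A, B) = inf { d(x,y) : x ∈ A, y ∈ B }` of two sets. -/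
noncomputable def SetDist {X : Type*} [MetricSpace X] (A B : Set X) : ℝ :=
  sInf (Set.image2 dist A B)

/-- The index function `Φ_{a}` determined by the fixed surjection `Ψ` (where `Ψ m` stands
for the value of `Ψ` at the odd number `2m+1`): `Φ(2m+1) = Ψ(2m+1)` if it is a non-empty
valid index tuple of level at most `2m+1`, and the tuple `(1) ∈ I₁` (here `[0]`,
zero-indexed) otherwise. -/
noncomputable def PhiIdx (Ψ : ℕ → List ℕ) (a : ℕ → ℕ) (m : ℕ) : List ℕ :=
  if 1 ≤ (Ψ m).length ∧ (Ψ m).length ≤ 2 * m + 1 ∧ ValidIdx a (Ψ m) then Ψ m else [0]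

/-- A balanced scheme of size `n` (size `0` is the empty scheme): branching numbers `a`
(meaningful for `k < 2n`), non-empty open sets `U l` for valid tuples `l` of level
`1 ≤ l.length ≤ 2n`, and constants `b` witnessing conditions (1)–(5) of the definition of
balanced schemes; condition (5) is governed by the index function `PhiIdx Ψ a`. -/
def IsBalancedScheme {X : Type*} [MetricSpace X] (Ψ : ℕ → List ℕ) (n : ℕ)
    (a : ℕ → ℕ) (U : List ℕ → Set X) (b : ℕ → ℝ) : Prop :=
  (∀ k, k < 2 * n → 1 ≤ a k) ∧
  (1 ≤ n → 2 ≤ a 0) ∧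
  (∀ k, 1 ≤ k → k < 2 * n → k * ∏ i ∈ Finset.range k, a i ≤ a k) ∧
  (∀ l, ValidIdx a l → 1 ≤ l.length → l.length ≤ 2 * n → (U l).Nonempty ∧ IsOpen (U l)) ∧
  (∀ l x, ValidIdx a (l ++ [x]) → 1 ≤ l.length → l.length + 1 ≤ 2 * n →
    closure (U (l ++ [x])) ⊆ U l) ∧
  (∀ k, 1 ≤ k → k ≤ 2 * n → 0 < b k) ∧
  (∀ l, ValidIdx a l → 1 ≤ l.length → l.length ≤ 2 * n → Metric.diam (U l) ≤ b l.length) ∧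
  (∀ l l', ValidIdx a l → ValidIdx a l' → 1 ≤ l.length → l.length = l'.length →
    l.length ≤ 2 * n → l ≠ l' → 2 * b l.length < SetDist (U l) (U l')) ∧
  (∀ m i j, 2 * m + 1 < 2 * n → ValidIdx a i → ValidIdx a j →
    i.length = 2 * m + 1 → j.length = 2 * m + 1 →
    U i ⊆ U (PhiIdx Ψ a m) → ¬ U j ⊆ U (PhiIdx Ψ a m) →
    ∀ s t, s < a (2 * m + 1) → t < a (2 * m + 1) → s ≠ t →
      Metric.diam (⋃ u ∈ Finset.range (a (2 * m + 1)), U (j ++ [u])) <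
        SetDist (U (i ++ [s])) (U (i ++ [t]))) 

/-- The open subset `𝒰(π) ⊆ K(X)` associated to a balanced scheme of size `n`: the
non-empty compact sets covered by the level-`2n` sets and meeting each of them.
For `n = 0` it is all of `K(X)`. -/
def SchemeSet {X : Type*} [MetricSpace X] (a : ℕ → ℕ) (U : List ℕ → Set X) (n : ℕ) :
    Set (NonemptyCompacts X) :=
  if n = 0 then Set.univ else
    {K | (K : Set X) ⊆ (⋃ l ∈ {l : List ℕ | ValidIdx a l ∧ l.length = 2 * n}, U l) ∧
      ∀ l, ValidIdx a l → l.length = 2 * n → ((K : Set X) ∩ U l).Nonempty}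

/-- A scheme of size `n + 1` with data `(a', U')` is consistent with a scheme of size `n`
with data `(a, U)` if the data agree on all levels `k ≤ 2n`. -/
def SchemeConsistent {X : Type*} [MetricSpace X] (n : ℕ) (a a' : ℕ → ℕ)
    (U U' : List ℕ → Set X) : Prop :=
  (∀ k, k < 2 * n → a' k = a k) ∧
    ∀ l : List ℕ, ValidIdx a l → 1 ≤ l.length → l.length ≤ 2 * n → U' l = U l

open Metric

section Perfect
variable {X : Type*} [MetricSpace X]

lemma perfect_exists_notMem (hperf : ∀ x : X, (nhdsWithin x {x}ᶜ).NeBot)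
    {S : Set X} (hS : IsOpen S) {x : X} (hx : x ∈ S) {F : Set X} (hF : F.Finite) :
    ∃ z ∈ S, z ∉ F := by
  have hFc : IsClosed (F \ {x}) := (hF.subset diff_subset).isClosed
  have hmem : (S \ (F \ {x})) ∈ nhds x := by
    refine (hS.sdiff hFc).mem_nhds ⟨hx, by simp⟩
  have := (hperf x).nonempty_of_mem (inter_mem_nhdsWithin _ hmem)
  obtain ⟨z, hzx, hzS, hznF⟩ := this
  exact ⟨z, hzS, fun hzF => hznF ⟨hzF, by simpa using hzx⟩⟩

lemma exists_injOn_mem (hperf : ∀ x : X, (nhdsWithin x {x}ᶜ).NeBot) [Nonempty X]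
    {α : Type*} (F : Finset α) (S : α → Set X)
    (h : ∀ i ∈ F, IsOpen (S i) ∧ (S i).Nonempty) :
    ∃ z : α → X, Set.InjOn z ↑F ∧ ∀ i ∈ F, z i ∈ S i := by
  classical
  induction F using Finset.induction with
  | empty => exact ⟨fun _ => Classical.arbitrary X, by simp, by simp⟩
  | @insert a F ha ih =>
    obtain ⟨z, hz1, hz2⟩ := ih (fun i hi => h i (Finset.mem_insert_of_mem hi))
    obtain ⟨hSo, x, hx⟩ := h a (Finset.mem_insert_self a F)
    obtain ⟨w, hw1, hw2⟩ := perfect_exists_notMem hperf hSo hx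
      ((F.finite_toSet).image z)
    refine ⟨Function.update z a w, ?_, ?_⟩
    · intro i hi j hj hij
      simp only [Finset.coe_insert, Set.mem_insert_iff] at hi hj
      rcases hi with rfl | hi <;> rcases hj with rfl | hj
      · rfl
      · exfalso; rw [Function.update_self, Function.update_of_ne (by rintro rfl; exact ha hj)] at hij
        exact hw2 ⟨j, hj, hij.symm⟩
      · exfalso; rw [Function.update_self, Function.update_of_ne (by rintro rfl; exact ha hi)] at hij
        exact hw2 ⟨i, hi, hij⟩
      · rw [Function.update_of_ne (by rintro rfl; exact ha hi),
          Function.update_of_ne (by rintro rfl; exact ha hj)] at hij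
        exact hz1 hi hj hij
    · intro i hi
      rcases Finset.mem_insert.1 hi with rfl | hi2
      · simpa using hw1
      · rw [Function.update_of_ne (by rintro rfl; exact ha hi2)]
        exact hz2 i hi2

end Perfect

section Valid

lemma validIdx_nil (a : ℕ → ℕ) : ValidIdx a [] := by intro k hk; simp at hk

lemma validIdx_append {a : ℕ → ℕ} {l : List ℕ} {x : ℕ} :
    ValidIdx a (l ++ [x]) ↔ ValidIdx a l ∧ x < a l.length := by
  constructor
  · intro h
    constructor
    · intro k hk
      have hk' : k < (l ++ [x]).length := by simp; omega
      have := h k hk'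
      rwa [List.get_eq_getElem, List.getElem_append_left hk] at this
    · have hk' : l.length < (l ++ [x]).length := by simp
      have := h l.length hk'
      simpa using this
  · rintro ⟨h1, h2⟩ k hk
    simp only [List.length_append, List.length_singleton] at hk
    rcases Nat.lt_or_ge k l.length with hkl | hkl
    · rw [List.get_eq_getElem, List.getElem_append_left hkl]; exact h1 k hkl
    · have : k = l.length := by omega
      subst this
      simpa using h2

lemma validIdx_congr {a a' : ℕ → ℕ} {l : List ℕ} (h : ∀ k, k < l.length → a k = a' k) :
    ValidIdx a l ↔ ValidIdx a' l := by
  constructor <;> intro hv k hk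
  · rw [← h k hk]; exact hv k hk
  · rw [h k hk]; exact hv k hk

noncomputable def tupFinset (a : ℕ → ℕ) : ℕ → Finset (List ℕ)
  | 0 => {[]}
  | m + 1 => ((tupFinset a m) ×ˢ Finset.range (a m)).image (fun p => p.1 ++ [p.2])

lemma mem_tupFinset {a : ℕ → ℕ} {m : ℕ} {l : List ℕ} :
    l ∈ tupFinset a m ↔ ValidIdx a l ∧ l.length = m := by
  induction m generalizing l with
  | zero =>
    simp only [tupFinset, Finset.mem_singleton]
    constructor
    · rintro rfl; exact ⟨validIdx_nil a, rfl⟩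
    · rintro ⟨-, hl⟩; exact List.length_eq_zero_iff.1 hl
  | succ m ih =>
    simp only [tupFinset, Finset.mem_image, Finset.mem_product, Finset.mem_range, Prod.exists]
    constructor
    · rintro ⟨p, x, ⟨hp, hx⟩, rfl⟩
      have := (ih (l := p)).1 hp
      refine ⟨validIdx_append.2 ⟨this.1, by rwa [this.2]⟩, by simp [this.2]⟩
    · rintro ⟨hv, hl⟩
      have hne : l ≠ [] := by rintro rfl; simp at hl
      refine ⟨l.dropLast, l.getLast hne, ⟨?_, ?_⟩, List.dropLast_append_getLast hne⟩
      · refine (ih).2 ⟨?_, ?_⟩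
        · have := validIdx_append (a := a) (l := l.dropLast) (x := l.getLast hne)
          rw [List.dropLast_append_getLast hne] at this
          exact (this.1 hv).1
        · rw [List.length_dropLast, hl]; rfl
      · have := validIdx_append (a := a) (l := l.dropLast) (x := l.getLast hne)
        rw [List.dropLast_append_getLast hne] at this
        have h2 := (this.1 hv).2
        rwa [List.length_dropLast, hl] at h2

lemma tupFinset_nonempty {a : ℕ → ℕ} {m : ℕ} (h : ∀ k, k < m → 1 ≤ a k) :
    (tupFinset a m).Nonempty := by
  induction m with
  | zero => exact ⟨[], by simp [tupFinset]⟩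
  | succ m ih =>
    obtain ⟨l, hl⟩ := ih (fun k hk => h k (by omega))
    exact ⟨l ++ [0], by
      simp only [tupFinset, Finset.mem_image, Finset.mem_product, Finset.mem_range, Prod.exists]
      exact ⟨l, 0, ⟨hl, h m (by omega)⟩, rfl⟩⟩

end Valid

section Min

noncomputable def finMin {α : Type*} (s : Finset α) (f : α → ℝ) : ℝ :=
  if h : s.Nonempty then s.inf' h f else 1

lemma finMin_pos {α : Type*} {s : Finset α} {f : α → ℝ} (h : ∀ x ∈ s, 0 < f x) :
    0 < finMin s f := by
  unfold finMin
  split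
  · next hs => exact (Finset.lt_inf'_iff hs).2 h
  · norm_num

lemma finMin_le {α : Type*} {s : Finset α} {f : α → ℝ} {x : α} (hx : x ∈ s) :
    finMin s f ≤ f x := by
  unfold finMin
  rw [dif_pos ⟨x, hx⟩]
  exact Finset.inf'_le f hx

end Min

section Dist
variable {X : Type*} [MetricSpace X]

lemma le_setDist {A B : Set X} {c : ℝ} (hA : A.Nonempty) (hB : B.Nonempty)
    (h : ∀ x ∈ A, ∀ y ∈ B, c ≤ dist x y) : c ≤ SetDist A B := by
  apply le_csInf (Set.Nonempty.image2 hA hB)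
  rintro d ⟨x, hx, y, hy, rfl⟩
  exact h x hx y hy

lemma le_setDist_ball {z z' : X} {r r' : ℝ} (hr : 0 < r) (hr' : 0 < r') :
    dist z z' - r - r' ≤ SetDist (ball z r) (ball z' r') := by
  apply le_setDist (nonempty_ball.2 hr) (nonempty_ball.2 hr')
  intro x hx y hy
  linarith [dist_triangle4 z x y z', dist_comm z x, mem_ball.1 hx, mem_ball.1 hy]

end Dist

section Valid2

noncomputable def lstIdx (q : List ℕ) : ℕ := (q.getLast?).getD 0

lemma lstIdx_concat (l : List ℕ) (i : ℕ) : lstIdx (l ++ [i]) = i := by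
  simp [lstIdx]

lemma tup_dec {a : ℕ → ℕ} {m : ℕ} {r : List ℕ} (hr : r ∈ tupFinset a (m+1)) :
    r.dropLast ∈ tupFinset a m ∧ lstIdx r < a m ∧ r = r.dropLast ++ [lstIdx r] := by
  obtain ⟨hv, hlen⟩ := mem_tupFinset.1 hr
  have hne : r ≠ [] := by rintro rfl; simp at hlen
  have hdec : r.dropLast ++ [r.getLast hne] = r := List.dropLast_append_getLast hne
  have hlst : lstIdx r = r.getLast hne := by
    rw [lstIdx, List.getLast?_eq_getLast hne]; rfl
  have hlen' : r.dropLast.length = m := by rw [List.length_dropLast, hlen]; rfl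
  have hv' := validIdx_append (a := a) (l := r.dropLast) (x := r.getLast hne)
  rw [hdec] at hv'
  obtain ⟨hv1, hv2⟩ := hv'.1 hv
  refine ⟨mem_tupFinset.2 ⟨hv1, hlen'⟩, ?_, by rw [hlst, hdec]⟩
  rw [hlst]; rwa [hlen'] at hv2

end Valid2

section MinSep
open scoped Classical
variable {α : Type*} {X : Type*} [MetricSpace X]

noncomputable def minSep (s : Finset α) (f : α → X) : ℝ :=
  finMin ((s ×ˢ s).filter (fun p => p.1 ≠ p.2)) (fun p => dist (f p.1) (f p.2))

lemma minSep_pos {s : Finset α} {f : α → X} (h : Set.InjOn f ↑s) : 0 < minSep s f := by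
  apply finMin_pos
  intro x hx
  rw [Finset.mem_filter, Finset.mem_product] at hx
  exact dist_pos.2 (fun hd => hx.2 (h hx.1.1 hx.1.2 hd))

lemma minSep_le {s : Finset α} {f : α → X} {x y : α} (hx : x ∈ s) (hy : y ∈ s)
    (hne : x ≠ y) : minSep s f ≤ dist (f x) (f y) := by
  exact finMin_le (x := (x, y))
    (by rw [Finset.mem_filter, Finset.mem_product]; exact ⟨⟨hx, hy⟩, hne⟩)

end MinSep

set_option maxHeartbeats 2000000 in
/-- Lemma: in a non-empty perfect Polish space, given a balanced scheme `π` of size `n`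
and a non-empty open set `𝒱 ⊆ 𝒰(π)` in the hyperspace `K(X)`, there is a balanced scheme
`π'` of size `n+1` consistent with `π` such that `𝒰(π') ⊆ 𝒱`. -/
theorem balanced_scheme_refinement
    {X : Type*} [MetricSpace X] [Nonempty X] [CompleteSpace X] [SeparableSpace X]
    (hperf : ∀ x : X, (nhdsWithin x {x}ᶜ).NeBot)
    (Ψ : ℕ → List ℕ) (hΨsurj : ∀ l : List ℕ, ∃ m, Ψ m = l)
    (hΨlen : ∀ m, (Ψ m).length ≤ 2 * m + 1)
    (n : ℕ) (a : ℕ → ℕ) (U : List ℕ → Set X) (b : ℕ → ℝ)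
    (hπ : IsBalancedScheme Ψ n a U b)
    (V : Set (NonemptyCompacts X)) (hVopen : IsOpen V) (hVne : V.Nonempty)
    (hVsub : V ⊆ SchemeSet a U n) :
    ∃ (a' : ℕ → ℕ) (U' : List ℕ → Set X) (b' : ℕ → ℝ),
      IsBalancedScheme Ψ (n + 1) a' U' b' ∧ SchemeConsistent n a a' U U' ∧
        SchemeSet a' U' (n + 1) ⊆ V := by
  classical
  obtain ⟨h1, h2, h3, h4, h5, h6, h7, h8, h9⟩ := hπ
  obtain ⟨K₀, hK₀⟩ := hVne
  obtain ⟨ε, hε, hball⟩ := Metric.isOpen_iff.1 hVopen K₀ hK₀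
  -- the ambient sets at level 2n
  set W : List ℕ → Set X := fun l => if n = 0 then univ else U l with hWdef
  set L : Finset (List ℕ) := tupFinset a (2*n) with hLdef
  have hLmem : ∀ {l : List ℕ}, l ∈ L ↔ ValidIdx a l ∧ l.length = 2*n :=
    fun {l} => mem_tupFinset
  have hWopen : ∀ l ∈ L, IsOpen (W l) ∧ (W l).Nonempty := by
    intro l hl
    by_cases hn : n = 0
    · simp [hWdef, hn]
    · obtain ⟨hv, hlen⟩ := hLmem.1 hl
      have := h4 l hv (by omega) (by omega)
      simp only [hWdef, if_neg hn]
      exact ⟨this.2, this.1⟩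
  have hK₀mem := hVsub hK₀
  have hK₀cov : (K₀ : Set X) ⊆ ⋃ l ∈ L, W l := by
    by_cases hn : n = 0
    · intro x _
      refine Set.mem_biUnion (hLmem.2 ⟨validIdx_nil a, by simp [hn]⟩ :
        ([] : List ℕ) ∈ L) ?_
      simp [hWdef, hn]
    · rw [SchemeSet, if_neg hn] at hK₀mem
      intro x hx
      obtain ⟨l, hl, hxl⟩ := Set.mem_iUnion₂.1 (hK₀mem.1 hx)
      exact Set.mem_biUnion (hLmem.2 hl) (by simpa [hWdef, if_neg hn] using hxl)
  have hK₀meet : ∀ l ∈ L, ((K₀ : Set X) ∩ W l).Nonempty := by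
    intro l hl
    by_cases hn : n = 0
    · simpa [hWdef, hn] using K₀.nonempty
    · rw [SchemeSet, if_neg hn] at hK₀mem
      obtain ⟨hv, hlen⟩ := hLmem.1 hl
      simpa [hWdef, if_neg hn] using hK₀mem.2 l hv hlen
  -- pick a point of K₀ in each W l
  choose! p hpK hpW using fun l hl => hK₀meet l hl
  -- a finite ε/8-net of K₀
  obtain ⟨T₀, hT₀K, hT₀fin, hT₀cov⟩ :=
    K₀.isCompact.finite_cover_balls (show (0:ℝ) < ε/8 by linarith)
  set T : Finset X := hT₀fin.toFinset with hTdef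
  -- selection of a level-2n set for each net point
  have hsel : ∀ x ∈ T, ∃ l ∈ L, x ∈ W l := by
    intro x hx
    have hxK : x ∈ (K₀ : Set X) := hT₀K (hT₀fin.mem_toFinset.1 hx)
    obtain ⟨l, hl, hxl⟩ := Set.mem_iUnion₂.1 (hK₀cov hxK)
    exact ⟨l, hl, hxl⟩
  choose! lsel hlselL hlselW using hsel
  -- the target points
  set y : List ℕ → ℕ → X := fun l i => ((T.filter (fun x => lsel x = l)).toList).getD i (p l)
    with hydef
  have hy : ∀ l ∈ L, ∀ i : ℕ, y l i ∈ (K₀ : Set X) ∩ W l := by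
    intro l hl i
    by_cases hi : i < ((T.filter (fun x => lsel x = l)).toList).length
    · have hmem : ((T.filter (fun x => lsel x = l)).toList).getD i (p l)
          ∈ (T.filter (fun x => lsel x = l)).toList := by
        rw [List.getD_eq_getElem _ _ hi]; exact List.getElem_mem hi
      rw [Finset.mem_toList, Finset.mem_filter] at hmem
      obtain ⟨hmT, hml⟩ := hmem
      refine ⟨hT₀K (hT₀fin.mem_toFinset.1 hmT), ?_⟩
      have := hlselW _ hmT
      rwa [hml] at this
    · have : y l i = p l := by
        simp only [hydef]
        exact List.getD_eq_default _ _ (by omega)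
      rw [this]
      exact ⟨hpK l hl, hpW l hl⟩
  have hy2 : ∀ x ∈ T, ∃ i, i < T.card ∧ y (lsel x) i = x := by
    intro x hx
    have hxf : x ∈ (T.filter (fun z => lsel z = lsel x)).toList := by
      rw [Finset.mem_toList, Finset.mem_filter]; exact ⟨hx, rfl⟩
    obtain ⟨i, hi, hix⟩ := List.mem_iff_getElem.1 hxf
    refine ⟨i, ?_, ?_⟩
    · calc i < _ := hi
        _ = (T.filter (fun z => lsel z = lsel x)).card := Finset.length_toList _
        _ ≤ T.card := Finset.card_filter_le _ _
    · simp only [hydef]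
      rw [List.getD_eq_getElem _ _ hi, hix]
  -- the branching numbers
  set P : ℕ := ∏ i ∈ Finset.range (2*n), a i with hPdef
  have hP1 : 1 ≤ P := Finset.one_le_prod' (fun i hi => h1 i (Finset.mem_range.1 hi))
  set A : ℕ := max 2 (max (2*n*P) T.card) with hAdef
  have hA2 : 2 ≤ A := le_max_left _ _
  set B : ℕ := (2*n+1)*P*A with hBdef
  have hB1 : 1 ≤ B := by
    have : 1*1*2 ≤ (2*n+1)*P*A := by
      apply Nat.mul_le_mul (Nat.mul_le_mul (by omega) hP1) hA2
    omega
  set a' : ℕ → ℕ := fun k => if k < 2*n then a k else if k = 2*n then A else B with ha'def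
  have ha'eq : ∀ k, k < 2*n → a' k = a k := fun k hk => if_pos hk
  have ha'2n : a' (2*n) = A := by simp [ha'def]
  have ha'2n1 : a' (2*n+1) = B := by simp [ha'def]
  have hvalid_iff : ∀ l : List ℕ, l.length ≤ 2*n → (ValidIdx a' l ↔ ValidIdx a l) :=
    fun l hl => validIdx_congr (a := a') (a' := a) (fun k hk => ha'eq k (by omega))
  -- the index sets at levels 2n+1 and 2n+2
  set F₁ : Finset (List ℕ) := tupFinset a' (2*n+1) with hF₁def
  set F₂ : Finset (List ℕ) := tupFinset a' (2*n+2) with hF₂def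
  have hmemF₁ : ∀ l i, (l ++ [i] ∈ F₁ ↔ l ∈ L ∧ i < A) := by
    intro l i
    rw [hF₁def, mem_tupFinset, validIdx_append]
    constructor
    · rintro ⟨⟨hv, hi⟩, hlen⟩
      have hlen' : l.length = 2*n := by simp at hlen; omega
      refine ⟨hLmem.2 ⟨(hvalid_iff l hlen'.le).1 hv, hlen'⟩, ?_⟩
      rwa [hlen', ha'2n] at hi
    · rintro ⟨hl, hi⟩
      obtain ⟨hv, hlen⟩ := hLmem.1 hl
      exact ⟨⟨(hvalid_iff l hlen.le).2 hv, by rwa [hlen, ha'2n]⟩, by simp [hlen]⟩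
  have hmemF₂ : ∀ q u, (q ++ [u] ∈ F₂ ↔ q ∈ F₁ ∧ u < B) := by
    intro q u
    rw [hF₂def, hF₁def, mem_tupFinset, mem_tupFinset, validIdx_append]
    constructor
    · rintro ⟨⟨hv, hu⟩, hlen⟩
      have hql : q.length = 2*n+1 := by simp at hlen; omega
      exact ⟨⟨hv, hql⟩, by rwa [hql, ha'2n1] at hu⟩
    · rintro ⟨⟨hv, hql⟩, hu⟩
      exact ⟨⟨hv, by rwa [hql, ha'2n1]⟩, by simp [hql]⟩
  have hF₁dec : ∀ q ∈ F₁, q.dropLast ∈ L ∧ lstIdx q < A ∧ q = q.dropLast ++ [lstIdx q] := by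
    intro q hq
    obtain ⟨hd, hl, he⟩ := tup_dec (a := a') (m := 2*n) hq
    refine ⟨?_, by rwa [ha'2n] at hl, he⟩
    obtain ⟨hv, hlen⟩ := mem_tupFinset.1 hd
    exact hLmem.2 ⟨(hvalid_iff _ hlen.le).1 hv, hlen⟩
  have hF₂dec : ∀ r ∈ F₂, r.dropLast ∈ F₁ ∧ lstIdx r < B ∧ r = r.dropLast ++ [lstIdx r] := by
    intro r hr
    have hr' : r ∈ tupFinset a' ((2*n+1)+1) := hr
    obtain ⟨hd, hl, he⟩ := tup_dec hr'
    exact ⟨hd, by rwa [ha'2n1] at hl, he⟩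
  have hF₁ne : F₁.Nonempty := by
    apply tupFinset_nonempty
    intro k hk
    by_cases hkn : k < 2*n
    · rw [ha'eq k hkn]; exact h1 k hkn
    · have : k = 2*n := by omega
      rw [this, ha'2n]; omega
  -- choose the level-(2n+1) centers
  set S₁ : List ℕ → Set X := fun q => Metric.ball (y q.dropLast (lstIdx q)) (ε/8) ∩ W q.dropLast
    with hS₁def
  have hS₁good : ∀ q ∈ F₁, IsOpen (S₁ q) ∧ (S₁ q).Nonempty := by
    intro q hq
    obtain ⟨hdL, _, _⟩ := hF₁dec q hq
    obtain ⟨hyK, hyW⟩ := hy _ hdL (lstIdx q)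
    exact ⟨Metric.isOpen_ball.inter (hWopen _ hdL).1,
      ⟨y q.dropLast (lstIdx q), Metric.mem_ball_self (by linarith), hyW⟩⟩
  obtain ⟨z, hzinj, hzmem⟩ := exists_injOn_mem hperf F₁ S₁ hS₁good
  -- radii for containment in the parent sets
  have hρ : ∀ q ∈ F₁, ∃ ρ, 0 < ρ ∧ Metric.ball (z q) ρ ⊆ W q.dropLast := by
    intro q hq
    obtain ⟨ρ, hρ1, hρ2⟩ := Metric.isOpen_iff.1 (hS₁good q hq).1 (z q) (hzmem q hq)
    exact ⟨ρ, hρ1, fun x hx => (hρ2 hx).2⟩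
  choose! ρq hρq1 hρq2 using hρ
  set ρm : ℝ := finMin F₁ ρq with hρmdef
  have hρmpos : 0 < ρm := finMin_pos (fun q hq => hρq1 q hq)
  set d₁ : ℝ := minSep F₁ z with hd₁def
  have hd₁pos : 0 < d₁ := minSep_pos hzinj
  have hd₁le : ∀ q ∈ F₁, ∀ q' ∈ F₁, q ≠ q' → d₁ ≤ dist (z q) (z q') :=
    fun q hq q' hq' hne => minSep_le hq hq' hne
  set r₁ : ℝ := min (ρm/2) (min (d₁/8) (ε/8)) with hr₁def
  have hr₁pos : 0 < r₁ := by
    apply lt_min (by linarith) (lt_min (by linarith) (by linarith))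
  have hr₁ρ : ∀ q ∈ F₁, r₁ < ρq q := by
    intro q hq
    have := finMin_le (f := ρq) hq
    have h2 : r₁ ≤ ρm/2 := min_le_left _ _
    simp only [← hρmdef] at this
    linarith [hρq1 q hq]
  have hr₁d : r₁ ≤ d₁/8 := le_trans (min_le_right _ _) (min_le_left _ _)
  have hr₁ε : r₁ ≤ ε/8 := le_trans (min_le_right _ _) (min_le_right _ _)
  -- the index function value and the classification
  set Φ : List ℕ := PhiIdx Ψ a' n with hΦdef
  have hΦlen : 1 ≤ Φ.length ∧ Φ.length ≤ 2*n+1 := by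
    rw [hΦdef, PhiIdx]
    split
    · next h => exact ⟨h.1, h.2.1⟩
    · simp
  set UΦ : Set X := if Φ.length ≤ 2*n then U Φ else Metric.ball (z Φ) r₁ with hUΦdef
  set Ins : List ℕ → Prop := fun q => Metric.ball (z q) r₁ ⊆ UΦ with hInsdef
  set F₂ins : Finset (List ℕ) := F₂.filter (fun r => Ins r.dropLast) with hF₂insdef
  set F₂out : Finset (List ℕ) := F₂.filter (fun r => ¬ Ins r.dropLast) with hF₂outdef
  -- children of "inside" nodes
  obtain ⟨w₁, hw₁inj, hw₁mem⟩ := exists_injOn_mem hperf F₂ins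
    (fun r => Metric.ball (z r.dropLast) (r₁/2))
    (fun r _ => ⟨Metric.isOpen_ball, Metric.nonempty_ball.2 (by linarith)⟩)
  set e : ℝ := minSep F₂ins w₁ with hedef
  have hepos : 0 < e := minSep_pos hw₁inj
  have hele : ∀ r ∈ F₂ins, ∀ r' ∈ F₂ins, r ≠ r' → e ≤ dist (w₁ r) (w₁ r') :=
    fun r hr r' hr' hne => minSep_le hr hr' hne
  -- children of "outside" nodes
  obtain ⟨w₂, hw₂inj, hw₂mem⟩ := exists_injOn_mem hperf F₂out
    (fun r => Metric.ball (z r.dropLast) (min (r₁/2) (e/8)))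
    (fun r _ => ⟨Metric.isOpen_ball, Metric.nonempty_ball.2
      (lt_min (by linarith) (by linarith))⟩)
  set w : List ℕ → X := fun r => if Ins r.dropLast then w₁ r else w₂ r with hwdef
  have hw_ball : ∀ r ∈ F₂, w r ∈ Metric.ball (z r.dropLast) (r₁/2) := by
    intro r hr
    simp only [hwdef]
    by_cases h : Ins r.dropLast
    · rw [if_pos h]
      exact hw₁mem r (Finset.mem_filter.2 ⟨hr, h⟩)
    · rw [if_neg h]
      have := hw₂mem r (Finset.mem_filter.2 ⟨hr, h⟩)
      exact Metric.ball_subset_ball (min_le_left _ _) this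
  have hwinj : Set.InjOn w ↑F₂ := by
    intro r hr r' hr' heq
    simp only [Finset.mem_coe] at hr hr'
    by_cases hpar : r.dropLast = r'.dropLast
    · by_cases h : Ins r.dropLast
      · have h' : Ins r'.dropLast := hpar ▸ h
        simp only [hwdef, if_pos h, if_pos h'] at heq
        exact hw₁inj (Finset.mem_filter.2 ⟨hr, h⟩) (Finset.mem_filter.2 ⟨hr', h'⟩) heq
      · have h' : ¬ Ins r'.dropLast := hpar ▸ h
        simp only [hwdef, if_neg h, if_neg h'] at heq
        exact hw₂inj (Finset.mem_filter.2 ⟨hr, h⟩) (Finset.mem_filter.2 ⟨hr', h'⟩) heq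
    · exfalso
      obtain ⟨hd, _, _⟩ := hF₂dec r hr
      obtain ⟨hd', _, _⟩ := hF₂dec r' hr'
      have hdist := hd₁le _ hd _ hd' hpar
      have hb := hw_ball r hr
      have hb' := hw_ball r' hr'
      rw [Metric.mem_ball] at hb hb'
      rw [heq] at hb
      have : dist (z r.dropLast) (z r'.dropLast) ≤ r₁ := by
        have := dist_triangle (z r.dropLast) (w r') (z r'.dropLast)
        rw [dist_comm (z r.dropLast) (w r')] at this
        linarith
      linarith
  set d₂ : ℝ := minSep F₂ w with hd₂def
  have hd₂pos : 0 < d₂ := minSep_pos hwinj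
  have hd₂le : ∀ r ∈ F₂, ∀ r' ∈ F₂, r ≠ r' → d₂ ≤ dist (w r) (w r') :=
    fun r hr r' hr' hne => minSep_le hr hr' hne
  set r₂ : ℝ := min (r₁/4) (min (e/16) (min (d₂/8) (ε/8))) with hr₂def
  have hr₂pos : 0 < r₂ :=
    lt_min (by linarith) (lt_min (by linarith) (lt_min (by linarith) (by linarith)))
  have hr₂a : r₂ ≤ r₁/4 := min_le_left _ _
  have hr₂b : r₂ ≤ e/16 := le_trans (min_le_right _ _) (min_le_left _ _)
  have hr₂c : r₂ ≤ d₂/8 :=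
    le_trans (min_le_right _ _) (le_trans (min_le_right _ _) (min_le_left _ _))
  have hr₂d : r₂ ≤ ε/8 :=
    le_trans (min_le_right _ _) (le_trans (min_le_right _ _) (min_le_right _ _))
  -- the new scheme
  set U' : List ℕ → Set X := fun l =>
    if l.length ≤ 2*n then U l
    else if l.length = 2*n+1 then Metric.ball (z l) r₁ else Metric.ball (w l) r₂
    with hU'def
  set b' : ℕ → ℝ := fun k => if k ≤ 2*n then b k else if k = 2*n+1 then 2*r₁ else 2*r₂
    with hb'def
  have hU'old : ∀ l : List ℕ, l.length ≤ 2*n → U' l = U l := fun l hl => if_pos hl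
  have hU'1 : ∀ l : List ℕ, l.length = 2*n+1 → U' l = Metric.ball (z l) r₁ := by
    intro l hl
    simp only [hU'def]
    rw [if_neg (by omega), if_pos hl]
  have hU'2 : ∀ l : List ℕ, l.length = 2*n+2 → U' l = Metric.ball (w l) r₂ := by
    intro l hl
    simp only [hU'def]
    rw [if_neg (by omega), if_neg (by omega)]
  refine ⟨a', U', b', ⟨?_, ?_, ?_, ?_, ?_, ?_, ?_, ?_, ?_⟩, ⟨ha'eq, fun l _ h1l hl2 => hU'old l hl2⟩, ?_⟩
  · -- (1a) a' positive
    intro k hk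
    simp only [ha'def]
    split
    · next h => exact h1 k h
    · split
      · omega
      · omega
  · -- (1b) a' 0 ≥ 2
    intro _
    by_cases hn : n = 0
    · subst hn
      simpa [ha'def] using hA2
    · have : a' 0 = a 0 := ha'eq 0 (by omega)
      rw [this]
      exact h2 (by omega)
  · -- (1c) growth
    intro k hk1 hk2
    have hprod : ∀ k', k' ≤ 2*n → ∏ i ∈ Finset.range k', a' i = ∏ i ∈ Finset.range k', a i :=
      fun k' hk' => Finset.prod_congr rfl
        (fun i hi => ha'eq i (by have := Finset.mem_range.1 hi; omega))
    rcases (by omega : k < 2*n ∨ k = 2*n ∨ k = 2*n+1) with h | h | h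
    · rw [ha'eq k h, hprod k h.le]
      exact h3 k hk1 h
    · subst h
      rw [ha'2n, hprod (2*n) le_rfl, ← hPdef]
      exact le_trans (le_max_left _ _) (le_max_right _ _)
    · subst h
      have hsucc : ∏ i ∈ Finset.range (2*n+1), a' i = (∏ i ∈ Finset.range (2*n), a' i) * A := by
        rw [Finset.prod_range_succ, ha'2n]
      rw [ha'2n1, hsucc, hprod (2*n) le_rfl, ← hPdef, hBdef]
      exact le_of_eq (mul_assoc _ _ _).symm
  · -- (2) open nonempty
    intro l hv h1l h2l
    rcases (by omega : l.length ≤ 2*n ∨ l.length = 2*n+1 ∨ l.length = 2*n+2) with h | h | h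
    · rw [hU'old l h]
      exact h4 l ((hvalid_iff l h).1 hv) h1l h
    · rw [hU'1 l h]
      exact ⟨Metric.nonempty_ball.2 hr₁pos, Metric.isOpen_ball⟩
    · rw [hU'2 l h]
      exact ⟨Metric.nonempty_ball.2 hr₂pos, Metric.isOpen_ball⟩
  · -- (3) closures
    intro l x hv h1l h2l
    rcases (by omega : l.length + 1 ≤ 2*n ∨ l.length + 1 = 2*n+1 ∨ l.length + 1 = 2*n+2)
      with h | h | h
    · rw [hU'old (l++[x]) (by simp; omega), hU'old l (by omega)]
      exact h5 l x ((hvalid_iff _ (by simp; omega)).1 hv) h1l h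
    · have hnz : n ≠ 0 := by omega
      have hq : l ++ [x] ∈ F₁ := mem_tupFinset.2 ⟨hv, by simp; omega⟩
      rw [hU'1 (l++[x]) (by simp; omega), hU'old l (by omega)]
      intro c hc
      have hc1 : c ∈ Metric.closedBall (z (l++[x])) r₁ := Metric.closure_ball_subset_closedBall hc
      have hc2 : c ∈ Metric.ball (z (l++[x])) (ρq (l++[x])) := by
        rw [Metric.mem_closedBall] at hc1
        rw [Metric.mem_ball]
        exact lt_of_le_of_lt hc1 (hr₁ρ _ hq)
      have := hρq2 _ hq hc2
      rw [List.dropLast_concat] at this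
      simpa only [hWdef, if_neg hnz] using this
    · have hq : l ++ [x] ∈ F₂ := mem_tupFinset.2 ⟨hv, by simp; omega⟩
      rw [hU'2 (l++[x]) (by simp; omega), hU'1 l (by omega)]
      intro c hc
      have hc1 := Metric.closure_ball_subset_closedBall hc
      rw [Metric.mem_closedBall] at hc1
      have hc2 := hw_ball _ hq
      rw [List.dropLast_concat, Metric.mem_ball] at hc2
      rw [Metric.mem_ball]
      calc dist c (z l) ≤ dist c (w (l++[x])) + dist (w (l++[x])) (z l) := dist_triangle _ _ _
        _ < r₂ + r₁/2 := by linarith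
        _ ≤ r₁ := by linarith
  · -- b' positive
    intro k hk1 hk2
    simp only [hb'def]
    split
    · next h => exact h6 k hk1 h
    · split
      · linarith
      · linarith
  · -- (4a) diameters
    intro l hv h1l h2l
    rcases (by omega : l.length ≤ 2*n ∨ l.length = 2*n+1 ∨ l.length = 2*n+2) with h | h | h
    · have hb : b' l.length = b l.length := if_pos h
      rw [hU'old l h, hb]
      exact h7 l ((hvalid_iff l h).1 hv) h1l h
    · have hb : b' l.length = 2*r₁ := by
        show (if l.length ≤ 2*n then b l.length else if l.length = 2*n+1 then 2*r₁ else 2*r₂)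
          = 2*r₁
        rw [if_neg (by omega), if_pos h]
      rw [hU'1 l h, hb]
      exact Metric.diam_ball hr₁pos.le
    · have hb : b' l.length = 2*r₂ := by
        show (if l.length ≤ 2*n then b l.length else if l.length = 2*n+1 then 2*r₁ else 2*r₂)
          = 2*r₂
        rw [if_neg (by omega), if_neg (by omega)]
      rw [hU'2 l h, hb]
      exact Metric.diam_ball hr₂pos.le
  · -- (4b) separation
    intro l l' hvl hvl' h1l hlen h2l hne
    rcases (by omega : l.length ≤ 2*n ∨ l.length = 2*n+1 ∨ l.length = 2*n+2) with h | h | h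
    · have hb : b' l.length = b l.length := if_pos h
      rw [hU'old l h, hU'old l' (by omega), hb]
      exact h8 l l' ((hvalid_iff l h).1 hvl) ((hvalid_iff l' (by omega)).1 hvl') h1l hlen h hne
    · have hb : b' l.length = 2*r₁ := by
        show (if l.length ≤ 2*n then b l.length else if l.length = 2*n+1 then 2*r₁ else 2*r₂)
          = 2*r₁
        rw [if_neg (by omega), if_pos h]
      rw [hU'1 l h, hU'1 l' (by omega), hb]
      have hql : l ∈ F₁ := mem_tupFinset.2 ⟨hvl, h⟩
      have hql' : l' ∈ F₁ := mem_tupFinset.2 ⟨hvl', by omega⟩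
      have hd := hd₁le l hql l' hql' hne
      have hsd := le_setDist_ball (z := z l) (z' := z l') (r := r₁) (r' := r₁) hr₁pos hr₁pos
      linarith
    · have hb : b' l.length = 2*r₂ := by
        show (if l.length ≤ 2*n then b l.length else if l.length = 2*n+1 then 2*r₁ else 2*r₂)
          = 2*r₂
        rw [if_neg (by omega), if_neg (by omega)]
      rw [hU'2 l h, hU'2 l' (by omega), hb]
      have hql : l ∈ F₂ := mem_tupFinset.2 ⟨hvl, h⟩
      have hql' : l' ∈ F₂ := mem_tupFinset.2 ⟨hvl', by omega⟩
      have hd := hd₂le l hql l' hql' hne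
      have hsd := le_setDist_ball (z := w l) (z' := w l') (r := r₂) (r' := r₂) hr₂pos hr₂pos
      linarith
  · -- (5)
    intro m i j hm hvi hvj hleni hlenj hsubi hsubj s t hs ht hst
    rcases (by omega : m < n ∨ m = n) with hmn | hmn
    · -- old levels
      have hiff : (1 ≤ (Ψ m).length ∧ (Ψ m).length ≤ 2*m+1 ∧ ValidIdx a' (Ψ m))
          ↔ (1 ≤ (Ψ m).length ∧ (Ψ m).length ≤ 2*m+1 ∧ ValidIdx a (Ψ m)) := by
        constructor
        · rintro ⟨u1, u2, u3⟩
          exact ⟨u1, u2, (hvalid_iff _ (by omega)).1 u3⟩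
        · rintro ⟨u1, u2, u3⟩
          exact ⟨u1, u2, (hvalid_iff _ (by omega)).2 u3⟩
      have hΦeq : PhiIdx Ψ a' m = PhiIdx Ψ a m := by
        rw [PhiIdx, PhiIdx, if_congr hiff rfl rfl]
      have hΦmlen : (PhiIdx Ψ a m).length ≤ 2*n := by
        rw [PhiIdx]
        split
        · next hcond => omega
        · simp
          omega
      have hUΦ' : U' (PhiIdx Ψ a' m) = U (PhiIdx Ψ a m) := by
        rw [hΦeq]
        exact hU'old _ hΦmlen
      have ha'm : a' (2*m+1) = a (2*m+1) := ha'eq _ (by omega)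
      have hUu : (⋃ u ∈ Finset.range (a' (2*m+1)), U' (j ++ [u]))
          = ⋃ u ∈ Finset.range (a (2*m+1)), U (j ++ [u]) := by
        rw [ha'm]
        exact Set.iUnion₂_congr (fun u hu => hU'old _
          (by simp only [List.length_append, List.length_singleton, hlenj]; omega))
      rw [hUu, hU'old (i++[s])
          (by simp only [List.length_append, List.length_singleton, hleni]; omega),
        hU'old (i++[t])
          (by simp only [List.length_append, List.length_singleton, hleni]; omega)]
      exact h9 m i j (by omega) ((hvalid_iff i (by omega)).1 hvi)
        ((hvalid_iff j (by omega)).1 hvj) hleni hlenj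
        (by rwa [hU'old i (by omega), hUΦ'] at hsubi)
        (by rwa [hU'old j (by omega), hUΦ'] at hsubj)
        s t (by rwa [ha'm] at hs) (by rwa [ha'm] at ht) hst
    · -- the new level
      rw [hmn] at hleni hlenj hs ht hsubi hsubj ⊢
      clear hm hmn
      have hqi : i ∈ F₁ := mem_tupFinset.2 ⟨hvi, hleni⟩
      have hqj : j ∈ F₁ := mem_tupFinset.2 ⟨hvj, hlenj⟩
      have hU'Φ : U' Φ = UΦ := by
        rcases (by omega : Φ.length ≤ 2*n ∨ Φ.length = 2*n+1) with h | h
        · rw [hU'old Φ h, hUΦdef, if_pos h]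
        · rw [hU'1 Φ h, hUΦdef, if_neg (by omega)]
      rw [← hΦdef] at hsubi hsubj
      rw [hU'1 i hleni, hU'Φ] at hsubi
      rw [hU'1 j hlenj, hU'Φ] at hsubj
      have hInsi : Ins i := hsubi
      have hInsj : ¬ Ins j := hsubj
      have hsB : s < B := by rwa [ha'2n1] at hs
      have htB : t < B := by rwa [ha'2n1] at ht
      have hmem_s : i ++ [s] ∈ F₂ := (hmemF₂ i s).2 ⟨hqi, hsB⟩
      have hmem_t : i ++ [t] ∈ F₂ := (hmemF₂ i t).2 ⟨hqi, htB⟩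
      have hins_s : i ++ [s] ∈ F₂ins := Finset.mem_filter.2 ⟨hmem_s, by
        rw [List.dropLast_concat]; exact hInsi⟩
      have hins_t : i ++ [t] ∈ F₂ins := Finset.mem_filter.2 ⟨hmem_t, by
        rw [List.dropLast_concat]; exact hInsi⟩
      have hw_s : w (i++[s]) = w₁ (i++[s]) := by
        show (if Ins (i++[s]).dropLast then w₁ (i++[s]) else w₂ (i++[s])) = w₁ (i++[s])
        rw [List.dropLast_concat, if_pos hInsi]
      have hw_t : w (i++[t]) = w₁ (i++[t]) := by
        show (if Ins (i++[t]).dropLast then w₁ (i++[t]) else w₂ (i++[t])) = w₁ (i++[t])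
        rw [List.dropLast_concat, if_pos hInsi]
      have hne_st : i ++ [s] ≠ i ++ [t] := by
        intro hcontra
        exact hst (by simpa using hcontra)
      have he1 : e ≤ dist (w₁ (i++[s])) (w₁ (i++[t])) := hele _ hins_s _ hins_t hne_st
      have hsd := le_setDist_ball (z := w (i++[s])) (z' := w (i++[t])) (r := r₂) (r' := r₂)
        hr₂pos hr₂pos
      rw [hU'2 (i++[s]) (by simp only [List.length_append, List.length_singleton, hleni]),
        hU'2 (i++[t]) (by simp only [List.length_append, List.length_singleton, hleni])]
      have hcov : (⋃ u ∈ Finset.range (a' (2*n+1)), U' (j ++ [u]))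
          ⊆ Metric.ball (z j) (e/8 + r₂) := by
        intro x hx
        obtain ⟨u, hu, hxu⟩ := Set.mem_iUnion₂.1 hx
        have huB : u < B := by
          have := Finset.mem_range.1 hu
          rwa [ha'2n1] at this
        have hmem_u : j ++ [u] ∈ F₂ := (hmemF₂ j u).2 ⟨hqj, huB⟩
        have hout : j ++ [u] ∈ F₂out := Finset.mem_filter.2 ⟨hmem_u, by
          rw [List.dropLast_concat]; exact hInsj⟩
        have hw_u : w (j++[u]) = w₂ (j++[u]) := by
          show (if Ins (j++[u]).dropLast then w₁ (j++[u]) else w₂ (j++[u])) = w₂ (j++[u])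
          rw [List.dropLast_concat, if_neg hInsj]
        have hwu := hw₂mem _ hout
        rw [List.dropLast_concat] at hwu
        rw [hU'2 (j++[u]) (by simp only [List.length_append, List.length_singleton, hlenj])]
          at hxu
        have hd1 : dist x (w (j++[u])) < r₂ := Metric.mem_ball.1 hxu
        have hd2 : dist (w (j++[u])) (z j) < e/8 := by
          rw [hw_u]
          exact lt_of_lt_of_le (Metric.mem_ball.1 hwu) (min_le_right _ _)
        rw [Metric.mem_ball]
        calc dist x (z j) ≤ dist x (w (j++[u])) + dist (w (j++[u])) (z j) := dist_triangle _ _ _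
          _ < e/8 + r₂ := by linarith
      have hdiam : Metric.diam (⋃ u ∈ Finset.range (a' (2*n+1)), U' (j ++ [u]))
          ≤ 2*(e/8+r₂) := by
        refine le_trans (Metric.diam_mono hcov Metric.isBounded_ball) ?_
        exact Metric.diam_ball (by linarith)
      have hws : dist (w (i++[s])) (w (i++[t])) = dist (w₁ (i++[s])) (w₁ (i++[t])) := by
        rw [hw_s, hw_t]
      linarith
  · -- SchemeSet ⊆ V
    intro K hK
    rw [SchemeSet, if_neg (Nat.succ_ne_zero n)] at hK
    obtain ⟨hKcov, hKmeet⟩ := hK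
    have hTA : T.card ≤ A := le_trans (le_max_right _ _) (le_max_right _ _)
    have hdist : Metric.hausdorffDist (K : Set X) (K₀ : Set X) ≤ ε/2 := by
      apply Metric.hausdorffDist_le_of_mem_dist (by linarith)
      · intro x hx
        obtain ⟨l, hl, hxl⟩ := Set.mem_iUnion₂.1 (hKcov hx)
        obtain ⟨hvl, hlenl⟩ := hl
        have hlF₂ : l ∈ F₂ := mem_tupFinset.2 ⟨hvl, by omega⟩
        obtain ⟨hdF₁, -, -⟩ := hF₂dec l hlF₂
        obtain ⟨hdL, -, -⟩ := hF₁dec _ hdF₁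
        refine ⟨y (l.dropLast).dropLast (lstIdx l.dropLast),
          (hy _ hdL (lstIdx l.dropLast)).1, ?_⟩
        rw [hU'2 l (by omega)] at hxl
        have hwb := hw_ball l hlF₂
        have hzb := (hzmem _ hdF₁).1
        rw [Metric.mem_ball] at hxl hwb hzb
        have htri := dist_triangle4 x (w l) (z l.dropLast)
          (y (l.dropLast).dropLast (lstIdx l.dropLast))
        linarith
      · intro x hx
        obtain ⟨x₀, hx₀, hxb⟩ := Set.mem_iUnion₂.1 (hT₀cov hx)
        have hx₀T : x₀ ∈ T := hT₀fin.mem_toFinset.2 hx₀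
        obtain ⟨i, hiA, hyi⟩ := hy2 x₀ hx₀T
        have hiA' : i < A := lt_of_lt_of_le hiA hTA
        have hqF₁ : lsel x₀ ++ [i] ∈ F₁ := (hmemF₁ _ i).2 ⟨hlselL x₀ hx₀T, hiA'⟩
        have hrF₂ : (lsel x₀ ++ [i]) ++ [0] ∈ F₂ := (hmemF₂ _ 0).2 ⟨hqF₁, by omega⟩
        obtain ⟨hvr, hlenr⟩ := mem_tupFinset.1 hrF₂
        obtain ⟨k, hkK, hkU⟩ := hKmeet ((lsel x₀ ++ [i]) ++ [0]) hvr (by omega)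
        refine ⟨k, hkK, ?_⟩
        rw [hU'2 _ (by omega)] at hkU
        have hwb := hw_ball _ hrF₂
        rw [List.dropLast_concat] at hwb
        have hzb := (hzmem _ hqF₁).1
        rw [List.dropLast_concat, lstIdx_concat, hyi] at hzb
        rw [Metric.mem_ball] at hkU hwb hzb hxb
        have t1 := dist_triangle4 x x₀ (z (lsel x₀ ++ [i])) (w ((lsel x₀ ++ [i]) ++ [0]))
        have t2 := dist_triangle x (w ((lsel x₀ ++ [i]) ++ [0])) k
        have hc : dist x₀ (z (lsel x₀ ++ [i])) = dist (z (lsel x₀ ++ [i])) x₀ := dist_comm _ _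
        have hc2 : dist (w ((lsel x₀ ++ [i]) ++ [0])) k = dist k (w ((lsel x₀ ++ [i]) ++ [0])) :=
          dist_comm _ _
        have hc3 : dist (z (lsel x₀ ++ [i])) (w ((lsel x₀ ++ [i]) ++ [0]))
            = dist (w ((lsel x₀ ++ [i]) ++ [0])) (z (lsel x₀ ++ [i])) := dist_comm _ _
        linarith
    have hdK : dist K K₀ ≤ ε/2 := by
      rw [NonemptyCompacts.dist_eq]
      exact hdist
    exact hball (Metric.mem_ball.2 (by linarith))
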